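/- arXiv:math/9712266 — 4 statements merged into one kernel-verified Lean document; each statement's English description precedes it below -/
import Mathlib

section
/- In the Young–Fibonacci lattice, every Fibonacci word has exactly one more successor than predecessors. -/
/-- A Fibonacci word: a finite word in the alphabet `{1,2}`. -/
def IsFibWord (v : List ℕ) : Prop := ∀ x ∈ v, x = 1 ∨ x = 2

/-- The length of the head of a word: the maximal initial run of `2`'s. -/
def headLen : List ℕ → ℕ
  | 2 :: t => headLen t + 1
  | _ => 0

/-- The set of successors of a Fibonacci word `v` in the Young-Fibonacci order:
(i) prepend a `1`; (ii) replace the leftmost `1` by a `2`; (iii) insert a `1`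
between two `2`'s of the head, or immediately after the last `2` of the head. -/
def succs (v : List ℕ) : Set (List ℕ) :=
  {w | w = 1 :: v} ∪
  {w | ∃ u, v = List.replicate (headLen v) 2 ++ 1 :: u ∧
        w = List.replicate (headLen v + 1) 2 ++ u} ∪
  {w | ∃ j, 1 ≤ j ∧ j ≤ headLen v ∧
        w = List.replicate j 2 ++ 1 ::
              (List.replicate (headLen v - j) 2 ++ v.drop (headLen v))}

/-- The set of predecessors of a Fibonacci word `v` in the Young-Fibonacci order:
(i) delete the leftmost `1`; (ii) replace one of the `2`'s of the head by a `1`. -/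
def preds (v : List ℕ) : Set (List ℕ) :=
  {u | ∃ u', v = List.replicate (headLen v) 2 ++ 1 :: u' ∧
        u = List.replicate (headLen v) 2 ++ u'} ∪
  {u | ∃ j, j < headLen v ∧
        u = List.replicate j 2 ++ 1 ::
              (List.replicate (headLen v - 1 - j) 2 ++ v.drop (headLen v))}

lemma yf_headLen_two (t : List ℕ) : headLen (2 :: t) = headLen t + 1 := rfl

lemma yf_headLen_one (t : List ℕ) : headLen (1 :: t) = 0 := rfl

lemma yf_headLen_rep (k : ℕ) (t : List ℕ) :
    headLen (List.replicate k 2 ++ t) = k + headLen t := by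
  induction k with
  | zero => simp
  | succ n ih =>
      rw [List.replicate_succ, List.cons_append, yf_headLen_two, ih]; omega

lemma yf_headLen_rep_one (j : ℕ) (t : List ℕ) :
    headLen (List.replicate j 2 ++ 1 :: t) = j := by
  rw [yf_headLen_rep, yf_headLen_one]
  omega

lemma yf_decomp (v : List ℕ) :
    v = List.replicate (headLen v) 2 ++ v.drop (headLen v) := by
  induction v with
  | nil => rfl
  | cons a t ih =>
      rcases a with _ | _ | _ | n
      · rfl
      · rfl
      · rw [yf_headLen_two, List.replicate_succ, List.drop_succ_cons,
          List.cons_append]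
        exact congrArg (List.cons 2) ih
      · rfl

lemma yf_drop_ne_two (v : List ℕ) (t : List ℕ) :
    v.drop (headLen v) ≠ 2 :: t := by
  induction v generalizing t with
  | nil => simp [headLen]
  | cons a s ih =>
      rcases a with _ | _ | _ | n
      · simp [headLen]
      · simp [headLen]
      · rw [yf_headLen_two, List.drop_succ_cons]; exact ih t
      · intro h
        have : (n + 3 : ℕ) = 2 := by
          have := List.head_eq_of_cons_eq h
          omega
        omega

/-- In the Young-Fibonacci lattice, every Fibonacci word has exactly one more
successor than predecessors. -/
theorem stmt_5 (v : List ℕ) (hv : IsFibWord v) :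
    (succs v).ncard = (preds v).ncard + 1 := by
  have hdec := yf_decomp v
  set h := headLen v with hh
  set f : ℕ → List ℕ := fun j =>
    List.replicate j 2 ++ 1 :: (List.replicate (h - j) 2 ++ v.drop h) with hf
  set g : ℕ → List ℕ := fun j =>
    List.replicate j 2 ++ 1 :: (List.replicate (h - 1 - j) 2 ++ v.drop h) with hg
  have hfh : ∀ j, headLen (f j) = j := fun j => yf_headLen_rep_one _ _
  have hgh : ∀ j, headLen (g j) = j := fun j => yf_headLen_rep_one _ _
  have hfinj : Set.InjOn f (Set.Icc 1 h) := by
    intro a _ b _ hab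
    have := congrArg headLen hab
    rwa [hfh, hfh] at this
  have hginj : Set.InjOn g (Set.Iio h) := by
    intro a _ b _ hab
    have := congrArg headLen hab
    rwa [hgh, hgh] at this
  have hfim : ((f '' Set.Icc 1 h)).Finite := (Set.finite_Icc 1 h).image f
  have hgim : ((g '' Set.Iio h)).Finite := (Set.finite_Iio h).image g
  have hIcc : (Set.Icc 1 h).ncard = h := by
    rw [← Finset.coe_Icc, Set.ncard_coe_finset, Nat.card_Icc]; omega
  have hIio : (Set.Iio h).ncard = h := by
    rw [← Finset.coe_Iio, Set.ncard_coe_finset, Nat.card_Iio]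
  rcases hd : v.drop h with _ | ⟨x, u⟩
  · -- no `1` in v : v = replicate h 2
    have hmid : ∀ u : List ℕ, v ≠ List.replicate h 2 ++ 1 :: u := by
      intro u hu
      have h2 := hdec.symm.trans hu
      have := List.append_cancel_left h2
      rw [hd] at this
      cases this
    have hs : succs v = insert (1 :: v) (f '' Set.Icc 1 h) := by
      ext w
      constructor
      · rintro ((rfl | ⟨u, hu, _⟩) | ⟨j, hj1, hj2, rfl⟩)
        · exact Set.mem_insert _ _
        · exact absurd hu (hmid u)
        · exact Set.mem_insert_of_mem _ ⟨j, Set.mem_Icc.2 ⟨hj1, hj2⟩, rfl⟩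
      · rintro (rfl | ⟨j, hj, rfl⟩)
        · exact Or.inl (Or.inl rfl)
        · exact Or.inr ⟨j, (Set.mem_Icc.1 hj).1, (Set.mem_Icc.1 hj).2, rfl⟩
    have hp : preds v = g '' Set.Iio h := by
      ext w
      constructor
      · rintro (⟨u, hu, _⟩ | ⟨j, hj, rfl⟩)
        · exact absurd hu (hmid u)
        · exact ⟨j, hj, rfl⟩
      · rintro ⟨j, hj, rfl⟩
        exact Or.inr ⟨j, hj, rfl⟩
    have hnm : (1 :: v) ∉ f '' Set.Icc 1 h := by
      rintro ⟨j, hj, hje⟩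
      have := congrArg headLen hje
      rw [hfh, yf_headLen_one] at this
      have := (Set.mem_Icc.1 hj).1
      omega
    rw [hs, hp, Set.ncard_insert_of_notMem hnm hfim,
      Set.ncard_image_of_injOn hfinj, Set.ncard_image_of_injOn hginj, hIcc, hIio]
  · -- v = replicate h 2 ++ 1 :: u
    have hx : x = 1 := by
      have hxv : x ∈ v := by
        have : x ∈ v.drop h := by rw [hd]; exact List.mem_cons_self
        exact List.mem_of_mem_drop this
      rcases hv x hxv with h1 | h2
      · exact h1
      · exfalso; exact yf_drop_ne_two v u (by rw [hd, h2])
    subst hx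
    have hv1 : v = List.replicate h 2 ++ 1 :: u := by
      nth_rewrite 1 [hdec]; rw [hd]
    have huniq : ∀ u' : List ℕ, v = List.replicate h 2 ++ 1 :: u' → u' = u := by
      intro u' hu'
      have := List.append_cancel_left (hu'.symm.trans hv1)
      exact (List.cons.injEq _ _ _ _ ▸ this).2
    have hs : succs v =
        insert (1 :: v) (insert (List.replicate (h + 1) 2 ++ u) (f '' Set.Icc 1 h)) := by
      ext w
      constructor
      · rintro ((rfl | ⟨u', hu', rfl⟩) | ⟨j, hj1, hj2, rfl⟩)
        · exact Set.mem_insert _ _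
        · rw [huniq u' hu']
          exact Set.mem_insert_of_mem _ (Set.mem_insert _ _)
        · exact Set.mem_insert_of_mem _
            (Set.mem_insert_of_mem _ ⟨j, Set.mem_Icc.2 ⟨hj1, hj2⟩, rfl⟩)
      · rintro (rfl | rfl | ⟨j, hj, rfl⟩)
        · exact Or.inl (Or.inl rfl)
        · exact Or.inl (Or.inr ⟨u, hv1, rfl⟩)
        · exact Or.inr ⟨j, (Set.mem_Icc.1 hj).1, (Set.mem_Icc.1 hj).2, rfl⟩
    have hp : preds v = insert (List.replicate h 2 ++ u) (g '' Set.Iio h) := by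
      ext w
      constructor
      · rintro (⟨u', hu', rfl⟩ | ⟨j, hj, rfl⟩)
        · rw [huniq u' hu']; exact Set.mem_insert _ _
        · exact Set.mem_insert_of_mem _ ⟨j, hj, rfl⟩
      · rintro (rfl | ⟨j, hj, rfl⟩)
        · exact Or.inl ⟨u, hv1, rfl⟩
        · exact Or.inr ⟨j, hj, rfl⟩
    have hB : headLen (List.replicate (h + 1) 2 ++ u) = h + 1 + headLen u :=
      yf_headLen_rep _ _
    have hP : headLen (List.replicate h 2 ++ u) = h + headLen u :=
      yf_headLen_rep _ _
    have hnm1 : (List.replicate (h + 1) 2 ++ u) ∉ f '' Set.Icc 1 h := by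
      rintro ⟨j, hj, hje⟩
      have := congrArg headLen hje
      rw [hfh, hB] at this
      have := (Set.mem_Icc.1 hj).2
      omega
    have hnm2 : (1 :: v) ∉
        insert (List.replicate (h + 1) 2 ++ u) (f '' Set.Icc 1 h) := by
      rintro (he | ⟨j, hj, hje⟩)
      · have := congrArg headLen he
        rw [yf_headLen_one, hB] at this
        omega
      · have := congrArg headLen hje
        rw [hfh, yf_headLen_one] at this
        have := (Set.mem_Icc.1 hj).1
        omega
    have hnm3 : (List.replicate h 2 ++ u) ∉ g '' Set.Iio h := by
      rintro ⟨j, hj, hje⟩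
      have := congrArg headLen hje
      rw [hgh, hP] at this
      have : j < h := hj
      omega
    rw [hs, hp,
      Set.ncard_insert_of_notMem hnm2 (hfim.insert _),
      Set.ncard_insert_of_notMem hnm1 hfim,
      Set.ncard_insert_of_notMem hnm3 hgim,
      Set.ncard_image_of_injOn hfinj, Set.ncard_image_of_injOn hginj, hIcc, hIio]
end

section
/- Let Γ be a branching diagram (graded graph with unique minimal element ∅ and finite levels) and let t = (v_0, v_1, …) be an infinite path in Γ such that d(∅, t) := lim_n d(∅, v_n) is finite, where d(u,w) is the number of saturated chains from u to w. Then the function φ_t(v) = d(v,t)/d(∅,t), with d(v,t) := lim_n d(v, v_n), is a non-negative harmonic function on Γ with φ_t(∅) = 1, i.e., φ_t(u) = Σ_{w : u ⋖ w} φ_t(w) for every vertex u. -/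
/-- A branching diagram: a graded graph with finite levels, a unique minimal
vertex `bot` of rank `0`, no maximal vertices, and every vertex of positive
rank covering some vertex. `covers u w` means `w` covers `u` (`u ⋖ w`). -/
structure BranchingDiagram where
  V : Type
  rank : V → ℕ
  covers : V → V → Prop
  rank_covers : ∀ u w, covers u w → rank w = rank u + 1
  finite_level : ∀ n : ℕ, {v : V | rank v = n}.Finite
  bot : V
  rank_bot : rank bot = 0
  bot_unique : ∀ v, rank v = 0 → v = bot
  no_max : ∀ v, ∃ w, covers v w
  exists_pred : ∀ v, rank v ≠ 0 → ∃ u, covers u v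

/-- `Γ.d u w` is the number of saturated chains (paths along covering relations)
from `u` to `w`. -/
noncomputable def BranchingDiagram.d (Γ : BranchingDiagram) (u w : Γ.V) : ℕ :=
  Set.ncard {p : List Γ.V | p.Chain' Γ.covers ∧ p.head? = some u ∧ p.getLast? = some w}

namespace BranchingDiagram

variable (Γ : BranchingDiagram)

def chains (u w : Γ.V) : Set (List Γ.V) :=
  {p : List Γ.V | p.Chain' Γ.covers ∧ p.head? = some u ∧ p.getLast? = some w}

lemma d_eq (u w : Γ.V) : Γ.d u w = (Γ.chains u w).ncard := rfl

/-- rank along a chain -/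
lemma chain_rank : ∀ (p : List Γ.V), p.Chain' Γ.covers → ∀ u w, p.head? = some u →
    p.getLast? = some w → Γ.rank w + 1 = Γ.rank u + p.length
  | [], _, u, w, h, _ => by simp at h
  | [a], _, u, w, h1, h2 => by
      simp only [List.head?_cons, Option.some.injEq] at h1
      simp only [List.getLast?_singleton, Option.some.injEq] at h2
      subst h1; subst h2; simp
  | a :: b :: l, hc, u, w, h1, h2 => by
      simp only [List.head?_cons, Option.some.injEq] at h1
      subst h1
      unfold List.Chain' at hc; rw [List.isChain_cons_cons] at hc
      rw [List.getLast?_cons_cons] at h2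
      have ih := chain_rank (b :: l) hc.2 b w rfl h2
      have hr := Γ.rank_covers a b hc.1
      simp only [List.length_cons] at ih ⊢
      omega

lemma mem_chains_rank {u w : Γ.V} {p : List Γ.V} (hp : p ∈ Γ.chains u w) :
    Γ.rank w + 1 = Γ.rank u + p.length :=
  Γ.chain_rank p hp.1 u w hp.2.1 hp.2.2

/-- decomposition of a chain by its first step -/
lemma chains_decomp {u w : Γ.V} {p : List Γ.V} (hp : p ∈ Γ.chains u w)
    (hlt : Γ.rank u < Γ.rank w) :
    ∃ w' q, Γ.covers u w' ∧ q ∈ Γ.chains w' w ∧ p = u :: q := by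
  have hlen := Γ.mem_chains_rank hp
  obtain ⟨hc, h1, h2⟩ := hp
  match p with
  | [] => simp at h1
  | [a] => simp at hlen; omega
  | a :: b :: l =>
      simp only [List.head?_cons, Option.some.injEq] at h1
      subst h1
      unfold List.Chain' at hc; rw [List.isChain_cons_cons] at hc
      rw [List.getLast?_cons_cons] at h2
      exact ⟨b, b :: l, hc.1, ⟨hc.2, rfl, h2⟩, rfl⟩

/-- composing a chain with a step on the right -/
lemma chains_concat {a b c : Γ.V} {q : List Γ.V} (hq : q ∈ Γ.chains a b)
    (hbc : Γ.covers b c) : q ++ [c] ∈ Γ.chains a c := by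
  obtain ⟨hc, h1, h2⟩ := hq
  have hne : q ≠ [] := by rintro rfl; simp at h1
  refine ⟨?_, ?_, ?_⟩
  · unfold List.Chain'; rw [List.isChain_append]
    refine ⟨hc, List.isChain_singleton _, ?_⟩
    intro x hx y hy
    simp only [List.head?_cons, Option.mem_def, Option.some.injEq] at hy
    rw [Option.mem_def, h2] at hx
    rw [← hy]; rw [Option.some.injEq] at hx; subst hx; exact hbc
  · rw [List.head?_append_of_ne_nil _ hne]; exact h1
  · exact List.getLast?_concat

/-- prepending a chain -/
lemma chains_prepend {u v w : Γ.V} {q p : List Γ.V} (hq : q ∈ Γ.chains u v)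
    (hp : p ∈ Γ.chains v w) : q ++ p.tail ∈ Γ.chains u w := by
  obtain ⟨hcq, hq1, hq2⟩ := hq
  obtain ⟨hcp, hp1, hp2⟩ := hp
  have hqne : q ≠ [] := by rintro rfl; simp at hq1
  match p with
  | [] => simp at hp1
  | v' :: p' =>
      simp only [List.head?_cons, Option.some.injEq] at hp1
      subst hp1
      unfold List.Chain' at hcp; rw [List.isChain_cons] at hcp
      refine ⟨?_, ?_, ?_⟩
      · unfold List.Chain'; rw [List.isChain_append]
        refine ⟨hcq, hcp.2, ?_⟩
        intro x hx y hy
        rw [Option.mem_def, hq2, Option.some.injEq] at hx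
        subst hx
        exact hcp.1 y hy
      · rw [List.head?_append_of_ne_nil _ hqne]; exact hq1
      · match p' with
        | [] =>
            simp only [List.getLast?_singleton, Option.some.injEq] at hp2
            subst hp2
            simp only [List.tail_cons, List.append_nil]
            exact hq2
        | b :: l =>
            rw [List.getLast?_cons_cons] at hp2
            simp only [List.tail_cons]
            rw [List.getLast?_append]
            rw [hp2]; rfl

lemma finite_level_le (n : ℕ) : {v : Γ.V | Γ.rank v ≤ n}.Finite := by
  have : {v : Γ.V | Γ.rank v ≤ n} = ⋃ k ∈ Finset.range (n + 1), {v : Γ.V | Γ.rank v = k} := by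
    ext v
    simp only [Set.mem_setOf_eq, Set.mem_iUnion, Finset.mem_range]
    constructor
    · intro h; exact ⟨Γ.rank v, by omega, rfl⟩
    · rintro ⟨k, hk, rfl⟩; omega
  rw [this]
  exact Set.Finite.biUnion (Finset.range (n + 1)).finite_toSet fun k _ => Γ.finite_level k

lemma finite_covers (u : Γ.V) : {w | Γ.covers u w}.Finite :=
  (Γ.finite_level (Γ.rank u + 1)).subset fun w hw => Γ.rank_covers u w hw

lemma finite_chains_aux : ∀ k (u w : Γ.V), Γ.rank w ≤ Γ.rank u + k → (Γ.chains u w).Finite := by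
  intro k
  induction k with
  | zero =>
      intro u w h
      apply Set.Finite.subset (Set.finite_singleton [u])
      intro p hp
      have hlen := Γ.mem_chains_rank hp
      have hne : p ≠ [] := by rintro rfl; simpa using hp.2.1
      have : p.length = 1 := by
        have := List.length_pos_iff.mpr hne; omega
      match p with
      | [a] =>
          have := hp.2.1
          simp only [List.head?_cons, Option.some.injEq] at this
          subst this; rfl
  | succ k ih =>
      intro u w h
      by_cases h' : Γ.rank w ≤ Γ.rank u + k
      · exact ih u w h'
      · have hlt : Γ.rank u < Γ.rank w := by omega
        have hsub : Γ.chains u w ⊆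
            ⋃ w' ∈ {w' | Γ.covers u w'}, (fun q => u :: q) '' Γ.chains w' w := by
          intro p hp
          obtain ⟨w', q, hw', hq, rfl⟩ := Γ.chains_decomp hp hlt
          exact Set.mem_biUnion hw' ⟨q, hq, rfl⟩
        apply Set.Finite.subset _ hsub
        apply Set.Finite.biUnion (Γ.finite_covers u)
        intro w' hw'
        apply Set.Finite.image
        apply ih
        have := Γ.rank_covers u w' hw'
        omega

lemma finite_chains (u w : Γ.V) : (Γ.chains u w).Finite :=
  Γ.finite_chains_aux (Γ.rank w) u w (Nat.le_add_left _ _)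

lemma d_bot_pos : ∀ n v, Γ.rank v = n → ∃ q, q ∈ Γ.chains Γ.bot v := by
  intro n
  induction n with
  | zero =>
      intro v hv
      have := Γ.bot_unique v hv
      subst this
      exact ⟨[Γ.bot], List.isChain_singleton _, rfl, rfl⟩
  | succ n ih =>
      intro v hv
      obtain ⟨u, hu⟩ := Γ.exists_pred v (by omega)
      have hru : Γ.rank u = n := by have := Γ.rank_covers u v hu; omega
      obtain ⟨q, hq⟩ := ih u hru
      exact ⟨q ++ [v], Γ.chains_concat hq hu⟩

/-- the basic recursion -/
lemma d_rec (u w : Γ.V) (hlt : Γ.rank u < Γ.rank w) :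
    Γ.d u w = ∑ w' ∈ (Γ.finite_covers u).toFinset, Γ.d w' w := by
  classical
  have key : (Γ.finite_chains u w).toFinset =
      (Γ.finite_covers u).toFinset.biUnion
        (fun w' => ((Γ.finite_chains w' w).toFinset).image (fun q => u :: q)) := by
    ext p
    simp only [Set.Finite.mem_toFinset, Finset.mem_biUnion, Finset.mem_image]
    constructor
    · intro hp
      obtain ⟨w', q, hw', hq, rfl⟩ := Γ.chains_decomp hp hlt
      exact ⟨w', hw', q, hq, rfl⟩
    · rintro ⟨w', hw', q, hq, rfl⟩
      obtain ⟨hcq, hq1, hq2⟩ := hq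
      have hqne : q ≠ [] := by rintro rfl; simp at hq1
      refine ⟨?_, rfl, ?_⟩
      · unfold List.Chain'; rw [List.isChain_cons]
        refine ⟨?_, hcq⟩
        intro y hy
        rw [Option.mem_def, hq1, Option.some.injEq] at hy
        subst hy; exact hw'
      · match q, hqne with
        | b :: l, _ => rw [List.getLast?_cons_cons]; exact hq2
  have hdisj : ∀ x ∈ (Γ.finite_covers u).toFinset, ∀ y ∈ (Γ.finite_covers u).toFinset,
      x ≠ y → Disjoint (((Γ.finite_chains x w).toFinset).image (fun q => u :: q))
        (((Γ.finite_chains y w).toFinset).image (fun q => u :: q)) := by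
    intro x _ y _ hxy
    rw [Finset.disjoint_left]
    rintro p hp1 hp2
    simp only [Finset.mem_image, Set.Finite.mem_toFinset] at hp1 hp2
    obtain ⟨q1, hq1, rfl⟩ := hp1
    obtain ⟨q2, hq2, heq⟩ := hp2
    have : q2 = q1 := by injection heq
    subst this
    exact hxy (by rw [← Option.some.injEq, ← hq1.2.1, ← hq2.2.1])
  rw [d_eq, Set.ncard_eq_toFinset_card _ (Γ.finite_chains u w), key,
    Finset.card_biUnion hdisj]
  apply Finset.sum_congr rfl
  intro w' _
  rw [Finset.card_image_of_injective _ (fun a b h => by injection h),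
    d_eq, Set.ncard_eq_toFinset_card _ (Γ.finite_chains w' w)]

lemma d_le_of_covers {u v w : Γ.V} (h : Γ.covers v w) : Γ.d u v ≤ Γ.d u w := by
  rw [d_eq, d_eq]
  have himg : (fun p => p ++ [w]) '' Γ.chains u v ⊆ Γ.chains u w := by
    rintro _ ⟨p, hp, rfl⟩
    exact Γ.chains_concat hp h
  have hinj : Set.InjOn (fun p => p ++ [w]) (Γ.chains u v) := by
    intro p1 _ p2 _ h12
    exact List.append_cancel_right h12
  calc (Γ.chains u v).ncard = ((fun p => p ++ [w]) '' Γ.chains u v).ncard :=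
        (Set.ncard_image_of_injOn hinj).symm
    _ ≤ (Γ.chains u w).ncard := Set.ncard_le_ncard himg (Γ.finite_chains u w)

lemma d_le_d_bot (v w : Γ.V) : Γ.d v w ≤ Γ.d Γ.bot w := by
  obtain ⟨q, hq⟩ := Γ.d_bot_pos (Γ.rank v) v rfl
  rw [d_eq, d_eq]
  have himg : (fun p => q ++ p.tail) '' Γ.chains v w ⊆ Γ.chains Γ.bot w := by
    rintro _ ⟨p, hp, rfl⟩
    exact Γ.chains_prepend hq hp
  have hinj : Set.InjOn (fun p => q ++ p.tail) (Γ.chains v w) := by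
    intro p1 h1 p2 h2 h12
    have ht : p1.tail = p2.tail := List.append_cancel_left h12
    have e1 : v :: p1.tail = p1 := List.cons_head?_tail h1.2.1
    have e2 : v :: p2.tail = p2 := List.cons_head?_tail h2.2.1
    rw [← e1, ← e2, ht]
  calc (Γ.chains v w).ncard = ((fun p => q ++ p.tail) '' Γ.chains v w).ncard :=
        (Set.ncard_image_of_injOn hinj).symm
    _ ≤ (Γ.chains Γ.bot w).ncard := Set.ncard_le_ncard himg (Γ.finite_chains Γ.bot w)

lemma one_le_d_bot (w : Γ.V) : 1 ≤ Γ.d Γ.bot w := by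
  obtain ⟨q, hq⟩ := Γ.d_bot_pos (Γ.rank w) w rfl
  rw [d_eq]
  exact (Set.ncard_pos (Γ.finite_chains Γ.bot w)).mpr ⟨q, hq⟩

end BranchingDiagram

/-- A `1`-differential poset: (D1) for distinct vertices of equal rank, the number
of common lower covers equals the number of common upper covers; (D2) each vertex
is covered by one more vertex than it covers. -/
def BranchingDiagram.IsDifferential (Γ : BranchingDiagram) : Prop :=
  (∀ u v : Γ.V, u ≠ v → Γ.rank u = Γ.rank v →
      Set.ncard {x | Γ.covers x u ∧ Γ.covers x v} =
        Set.ncard {w | Γ.covers u w ∧ Γ.covers v w}) ∧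
  (∀ v : Γ.V, Set.ncard {w | Γ.covers v w} = Set.ncard {u | Γ.covers u v} + 1)

/-- If `t` is an infinite path in a branching diagram with `d(∅,t) < ∞` (the
weakly increasing sequence `n ↦ d(∅, t n)` is bounded, hence eventually constant),
then `φ_t(v) = d(v,t)/d(∅,t)` is a non-negative normalized harmonic function. -/
theorem stmt_6 (Γ : BranchingDiagram) (t : ℕ → Γ.V)
    (ht : ∀ n, Γ.covers (t n) (t (n + 1)))
    (hfin : ∃ C, ∀ n, Γ.d Γ.bot (t n) ≤ C) :
    ∃ L : Γ.V → ℕ,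
      (∀ v, ∀ᶠ n in Filter.atTop, Γ.d v (t n) = L v) ∧
      0 < L Γ.bot ∧
      (L Γ.bot : ℝ) / (L Γ.bot : ℝ) = 1 ∧
      (∀ v, 0 ≤ (L v : ℝ) / (L Γ.bot : ℝ)) ∧
      (∀ u, (L u : ℝ) / (L Γ.bot : ℝ) =
        ∑ᶠ w ∈ {w | Γ.covers u w}, (L w : ℝ) / (L Γ.bot : ℝ)) := by
  classical
  obtain ⟨Cb, hCb⟩ := hfin
  set f : Γ.V → ℕ → ℕ := fun v n => Γ.d v (t n) with hf
  have hmono : ∀ v, Monotone (f v) := fun v =>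
    monotone_nat_of_le_succ fun n => Γ.d_le_of_covers (ht n)
  have hbdd : ∀ v n, f v n ≤ Cb := fun v n => (Γ.d_le_d_bot v (t n)).trans (hCb n)
  set L : Γ.V → ℕ := fun v => sSup (Set.range (f v)) with hL
  have hbddA : ∀ v, BddAbove (Set.range (f v)) := fun v =>
    ⟨Cb, by rintro _ ⟨n, rfl⟩; exact hbdd v n⟩
  have hLmem : ∀ v, ∃ N, f v N = L v := fun v => by
    have := Nat.sSup_mem (Set.range_nonempty (f v)) (hbddA v)
    exact this
  have hev : ∀ v, ∀ᶠ n in Filter.atTop, f v n = L v := by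
    intro v
    obtain ⟨N, hN⟩ := hLmem v
    filter_upwards [Filter.eventually_ge_atTop N] with n hn
    have h1 : f v N ≤ f v n := hmono v hn
    have h2 : f v n ≤ L v := le_csSup (hbddA v) ⟨n, rfl⟩
    omega
  have hLbot : 0 < L Γ.bot := by
    obtain ⟨N, hN⟩ := hLmem Γ.bot
    have h2 : 1 ≤ f Γ.bot N := Γ.one_le_d_bot (t N)
    omega
  have hrt : ∀ n, Γ.rank (t n) = Γ.rank (t 0) + n := by
    intro n
    induction n with
    | zero => rfl
    | succ n ih =>
        rw [Γ.rank_covers (t n) (t (n+1)) (ht n), ih]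
        omega
  have hLnat : ∀ u, L u = ∑ w' ∈ (Γ.finite_covers u).toFinset, L w' := by
    intro u
    have hrank : ∀ᶠ n in Filter.atTop, Γ.rank u < Γ.rank (t n) := by
      filter_upwards [Filter.eventually_ge_atTop (Γ.rank u + 1)] with n hn
      rw [hrt n]; omega
    have hall : ∀ᶠ n in Filter.atTop, ∀ w' ∈ (Γ.finite_covers u).toFinset, f w' n = L w' :=
      (Filter.eventually_all_finset _).mpr fun w' _ => hev w'
    obtain ⟨n, h1, h2, h3⟩ := ((hev u).and (hall.and hrank)).exists
    calc L u = f u n := h1.symm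
      _ = ∑ w' ∈ (Γ.finite_covers u).toFinset, Γ.d w' (t n) := Γ.d_rec u (t n) h3
      _ = ∑ w' ∈ (Γ.finite_covers u).toFinset, L w' :=
          Finset.sum_congr rfl fun w' hw' => h2 w' hw'
  refine ⟨L, hev, hLbot, ?_, ?_, ?_⟩
  · exact div_self (by exact_mod_cast hLbot.ne')
  · intro v
    positivity
  · intro u
    rw [finsum_mem_eq_finite_toFinset_sum _ (Γ.finite_covers u), ← Finset.sum_div]
    congr 1
    rw [hLnat u]
    push_cast
    rfl
end

section
/- Let Γ be a 1-differential poset and φ a non-negative normalized harmonic function on Γ. For 0 ≤ τ ≤ 1 define C_τ(φ)(v) = Σ_{k=0}^{n} (τ^k (1−τ)^{n−k} / (n−k)!) Σ_{|u|=k} φ(u) d(u,v), where n = |v|. Then C_τ(φ) is a non-negative normalized harmonic function on Γ. -/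
/-- The contraction `C_τ(φ)(v) = Σ_{k=0}^{n} (τ^k (1−τ)^{n−k}/(n−k)!) Σ_{|u|=k} φ(u) d(u,v)`,
where `n = |v|`. -/
noncomputable def BranchingDiagram.contract (Γ : BranchingDiagram) (τ : ℝ)
    (φ : Γ.V → ℝ) : Γ.V → ℝ := fun v =>
  ∑ k ∈ Finset.range (Γ.rank v + 1),
    τ ^ k * (1 - τ) ^ (Γ.rank v - k) / (Γ.rank v - k).factorial *
      ∑ᶠ u ∈ {u : Γ.V | Γ.rank u = k}, φ u * (Γ.d u v : ℝ)

namespace BranchingDiagram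
variable (Γ : BranchingDiagram)

noncomputable def lev (n : ℕ) : Finset Γ.V := (Γ.finite_level n).toFinset

lemma mem_lev {n : ℕ} {v : Γ.V} : v ∈ Γ.lev n ↔ Γ.rank v = n := by
  simp [lev, Set.Finite.mem_toFinset]

open Classical in
noncomputable def up (v : Γ.V) : Finset Γ.V :=
  (Γ.lev (Γ.rank v + 1)).filter (Γ.covers v ·)

open Classical in
noncomputable def down (v : Γ.V) : Finset Γ.V :=
  (Γ.lev (Γ.rank v - 1)).filter (fun x => Γ.covers x v)

open Classical in
lemma mem_up {v w : Γ.V} : w ∈ Γ.up v ↔ Γ.covers v w := by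
  classical
  simp only [up, Finset.mem_filter, mem_lev]
  exact ⟨fun h => h.2, fun h => ⟨Γ.rank_covers v w h, h⟩⟩

open Classical in
lemma mem_down {v x : Γ.V} : x ∈ Γ.down v ↔ Γ.covers x v := by
  classical
  simp only [down, Finset.mem_filter, mem_lev]
  refine ⟨fun h => h.2, fun h => ⟨?_, h⟩⟩
  have := Γ.rank_covers x v h
  omega

def cset (u w : Γ.V) : Set (List Γ.V) :=
  {p : List Γ.V | p.Chain' Γ.covers ∧ p.head? = some u ∧ p.getLast? = some w}

lemma d_def (u w : Γ.V) : Γ.d u w = (Γ.cset u w).ncard := rfl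

lemma cset_rank_len {p : List Γ.V} (hc : p.Chain' Γ.covers) :
    ∀ {u w : Γ.V}, p.head? = some u → p.getLast? = some w →
      Γ.rank w + 1 = Γ.rank u + p.length := by
  induction p with
  | nil => intro u w h; simp at h
  | cons a l ih =>
    intro u w hh hl
    have hau : a = u := by simpa using hh
    subst hau
    match l, hl with
    | [], hl =>
      have : a = w := by simpa using hl
      subst this; simp
    | b :: m, hl =>
      have hc' : List.Chain' Γ.covers (b :: m) := hc.tail
      have hcov : Γ.covers a b := (List.isChain_cons_cons.mp hc).1
      have hl' : (b :: m).getLast? = some w := by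
        rw [← hl]; rfl
      have := ih hc' (u := b) rfl hl'
      have hr := Γ.rank_covers a b hcov
      simp only [List.length_cons] at this ⊢
      omega

lemma cset_self (u : Γ.V) : Γ.cset u u = {[u]} := by
  ext p
  simp only [cset, Set.mem_setOf_eq, Set.mem_singleton_iff]
  constructor
  · rintro ⟨hc, hh, hl⟩
    have hlen := Γ.cset_rank_len hc hh hl
    have : p.length = 1 := by omega
    match p, this with
    | [a], _ =>
      have : a = u := by simpa using hh
      simp [this]
  · rintro rfl
    exact ⟨List.isChain_singleton u, rfl, rfl⟩

lemma d_self (u : Γ.V) : Γ.d u u = 1 := by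
  rw [d_def, cset_self, Set.ncard_singleton]

lemma cset_eq_empty {u w : Γ.V} (hne : u ≠ w) (hr : Γ.rank w ≤ Γ.rank u) :
    Γ.cset u w = ∅ := by
  ext p
  simp only [cset, Set.mem_setOf_eq, Set.mem_empty_iff_false, iff_false]
  rintro ⟨hc, hh, hl⟩
  have hlen := Γ.cset_rank_len hc hh hl
  have : p.length = 1 ∧ Γ.rank w = Γ.rank u := by
    have : 1 ≤ p.length := by
      cases p; · simp at hh
      · simp
    omega
  match p, this.1 with
  | [a], _ =>
    have h1 : a = u := by simpa using hh
    have h2 : a = w := by simpa using hl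
    exact hne (h1 ▸ h2)

lemma d_eq_zero {u w : Γ.V} (hne : u ≠ w) (hr : Γ.rank w ≤ Γ.rank u) :
    Γ.d u w = 0 := by
  rw [d_def, cset_eq_empty Γ hne hr, Set.ncard_empty]

end BranchingDiagram
namespace BranchingDiagram
variable (Γ : BranchingDiagram)

lemma covers_lower_finite (w : Γ.V) : {y | Γ.covers y w}.Finite := by
  apply (Γ.finite_level (Γ.rank w - 1)).subset
  intro y hy
  have := Γ.rank_covers y w hy
  simp only [Set.mem_setOf_eq]; omega

lemma covers_upper_finite (v : Γ.V) : {w | Γ.covers v w}.Finite := by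
  apply (Γ.finite_level (Γ.rank v + 1)).subset
  intro w hw
  exact Γ.rank_covers v w hw

lemma covers_upper_coe (v : Γ.V) : {w | Γ.covers v w} = ↑(Γ.up v) := by
  ext w; simp [mem_up]

lemma cset_decomp {u w : Γ.V} (hne : u ≠ w) :
    Γ.cset u w = (fun q => q ++ [w]) '' (⋃ y ∈ {y | Γ.covers y w}, Γ.cset u y) := by
  ext p
  simp only [Set.mem_image, Set.mem_iUnion, Set.mem_setOf_eq, exists_prop]
  constructor
  · rintro ⟨hc, hh, hl⟩
    have hlen := Γ.cset_rank_len hc hh hl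
    have hp : p ≠ [] := by rintro rfl; simp at hh
    have h2 : 2 ≤ p.length := by
      rcases p with _ | ⟨a, _ | ⟨b, m⟩⟩
      · simp at hh
      · exfalso
        have h1 : a = u := by simpa using hh
        have h2 : a = w := by simpa using hl
        exact hne (h1 ▸ h2)
      · simp only [List.length_cons]; omega
    have hw : p.getLast hp = w := by
      rw [List.getLast?_eq_getLast hp] at hl; simpa using hl
    have hdec : p.dropLast ++ [w] = p := by
      rw [← hw]; exact List.dropLast_append_getLast hp
    set q := p.dropLast with hq
    have hqne : q ≠ [] := by
      have : q.length = p.length - 1 := List.length_dropLast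
      intro h; rw [h] at this; simp at this; omega
    have hchain : q.Chain' Γ.covers ∧ (∀ x ∈ q.getLast?, ∀ y ∈ [w].head?, Γ.covers x y) := by
      have := List.isChain_append.mp (hdec ▸ hc)
      exact ⟨this.1, this.2.2⟩
    set y := q.getLast hqne with hy
    have hyl : q.getLast? = some y := List.getLast?_eq_getLast hqne
    have hcov : Γ.covers y w := by
      apply hchain.2 y
      · rw [hyl]; rfl
      · rfl
    refine ⟨q, ⟨y, hcov, hchain.1, ?_, hyl⟩, hdec⟩
    · -- head? q = some u
      rw [← hdec] at hh
      rw [List.head?_append] at hh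
      rcases hq' : q.head? with _ | a
      · exact absurd hq' (by simp [hqne])
      · rw [hq'] at hh; simpa using hh
  · rintro ⟨q, ⟨y, hcov, hc, hh, hl⟩, rfl⟩
    have hqne : q ≠ [] := by rintro rfl; simp at hh
    refine ⟨?_, ?_, List.getLast?_concat⟩
    · apply List.isChain_append.mpr
      refine ⟨hc, List.isChain_singleton w, ?_⟩
      intro x hx y' hy'
      simp only [List.head?_cons, Option.mem_def, Option.some.injEq] at hy'
      rw [hl] at hx
      simp only [Option.mem_def, Option.some.injEq] at hx
      subst hx; subst hy'; exact hcov
    · rw [List.head?_append]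
      rcases hq' : q.head? with _ | a
      · exact absurd hq' (by simp [hqne])
      · rw [hq'] at hh; simpa using hh

lemma cset_finite (u w : Γ.V) : (Γ.cset u w).Finite := by
  have key : ∀ N : ℕ, ∀ u w : Γ.V, Γ.rank w = N → (Γ.cset u w).Finite := by
    intro N
    induction N using Nat.strong_induction_on with
    | _ N ih =>
      intro u w hN
      by_cases hle : Γ.rank w ≤ Γ.rank u
      · by_cases heq : u = w
        · subst heq; rw [cset_self]; exact Set.finite_singleton _
        · rw [Γ.cset_eq_empty heq hle]; exact Set.finite_empty
      · have hne : u ≠ w := by rintro rfl; omega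
        rw [Γ.cset_decomp hne]
        apply Set.Finite.image
        apply Set.Finite.biUnion (Γ.covers_lower_finite w)
        intro y hy
        have hr := Γ.rank_covers y w hy
        exact ih (Γ.rank y) (by omega) u y rfl
  exact key (Γ.rank w) u w rfl

noncomputable def cf (u w : Γ.V) : Finset (List Γ.V) := (Γ.cset_finite u w).toFinset

lemma mem_cf {u w : Γ.V} {p : List Γ.V} : p ∈ Γ.cf u w ↔ p ∈ Γ.cset u w :=
  Set.Finite.mem_toFinset _

lemma d_card (u w : Γ.V) : Γ.d u w = (Γ.cf u w).card :=
  Set.ncard_eq_toFinset_card _ (Γ.cset_finite u w)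

end BranchingDiagram
namespace BranchingDiagram
variable (Γ : BranchingDiagram)

open scoped Classical

lemma cf_decomp {u w : Γ.V} (hne : u ≠ w) :
    Γ.cf u w = (Γ.down w).biUnion (fun y => (Γ.cf u y).image (· ++ [w])) := by
  classical
  ext p
  simp only [mem_cf, Finset.mem_biUnion, Finset.mem_image, mem_down, mem_cf]
  rw [Γ.cset_decomp hne]
  simp only [Set.mem_image, Set.mem_iUnion, Set.mem_setOf_eq, exists_prop]
  constructor
  · rintro ⟨q, ⟨y, hcov, hq⟩, rfl⟩; exact ⟨y, hcov, q, hq, rfl⟩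
  · rintro ⟨y, hcov, q, hq, rfl⟩; exact ⟨q, ⟨y, hcov, hq⟩, rfl⟩

lemma d_rec_s12 {u w : Γ.V} (hne : u ≠ w) :
    Γ.d u w = ∑ y ∈ Γ.down w, Γ.d u y := by
  classical
  rw [d_card, Γ.cf_decomp hne, Finset.card_biUnion]
  · exact Finset.sum_congr rfl fun y _ => by
      rw [Finset.card_image_of_injective _ (fun a b h => List.append_cancel_right h),
        d_card]
  · intro y hy y' hy' hyy'
    simp only [Finset.disjoint_left, Finset.mem_image]
    rintro p ⟨q, hq, rfl⟩ ⟨q', hq', heq⟩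
    have : q' = q := List.append_cancel_right heq
    subst this
    rw [mem_cf] at hq hq'
    have h1 := hq.2.2
    have h2 := hq'.2.2
    rw [h1] at h2
    exact hyy' (Option.some_injective _ h2)

end BranchingDiagram
namespace BranchingDiagram
variable (Γ : BranchingDiagram)

open scoped Classical

lemma covers_lower_coe (v : Γ.V) : {x | Γ.covers x v} = ↑(Γ.down v) := by
  ext x; simp [mem_down]

lemma up_card (hΓ : Γ.IsDifferential) (v : Γ.V) :
    (Γ.up v).card = (Γ.down v).card + 1 := by
  have := hΓ.2 v
  rwa [Γ.covers_upper_coe v, Γ.covers_lower_coe v, Set.ncard_coe_finset,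
    Set.ncard_coe_finset] at this

lemma common_card (hΓ : Γ.IsDifferential) {y v : Γ.V} (hne : y ≠ v)
    (hr : Γ.rank y = Γ.rank v) :
    ((Γ.up v).filter (fun w => Γ.covers y w)).card =
      ((Γ.down v).filter (fun x => Γ.covers x y)).card := by
  have h := hΓ.1 y v hne hr
  have e1 : {x | Γ.covers x y ∧ Γ.covers x v} =
      ↑((Γ.down v).filter (fun x => Γ.covers x y)) := by
    ext x; simp only [Set.mem_setOf_eq, Finset.coe_filter, mem_down]; tauto
  have e2 : {w | Γ.covers y w ∧ Γ.covers v w} =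
      ↑((Γ.up v).filter (fun w => Γ.covers y w)) := by
    ext w; simp only [Set.mem_setOf_eq, Finset.coe_filter, mem_up]; tauto
  rw [e1, e2, Set.ncard_coe_finset, Set.ncard_coe_finset] at h
  omega

lemma star (hΓ : Γ.IsDifferential) : ∀ (N : ℕ) (v : Γ.V), Γ.rank v = N → ∀ u : Γ.V,
    ∑ w ∈ Γ.up v, Γ.d u w =
      ∑ x ∈ Γ.down u, Γ.d x v + (Γ.rank v + 1 - Γ.rank u) * Γ.d u v := by
  intro N
  induction N using Nat.strong_induction_on with
  | _ N ih =>
  intro v hN u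
  by_cases hk : Γ.rank u ≤ Γ.rank v
  · -- main case
    -- step 1: expand d u w over down w
    have hstep1 : ∑ w ∈ Γ.up v, Γ.d u w =
        ∑ y ∈ Γ.lev (Γ.rank v), ((Γ.up v).filter (fun w => Γ.covers y w)).card * Γ.d u y := by
      have h1 : ∀ w ∈ Γ.up v, Γ.d u w =
          ∑ y ∈ Γ.lev (Γ.rank v), if Γ.covers y w then Γ.d u y else 0 := by
        intro w hw
        have hrw : Γ.rank w = Γ.rank v + 1 := Γ.rank_covers v w ((Γ.mem_up).mp hw)
        have hne : u ≠ w := by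
          intro h; subst h; omega
        rw [Γ.d_rec_s12 hne]
        have hr1 : Γ.rank w - 1 = Γ.rank v := by omega
        have : Γ.down w = (Γ.lev (Γ.rank v)).filter (fun y => Γ.covers y w) := by
          unfold down
          rw [hr1]
        rw [this, Finset.sum_filter]
      rw [Finset.sum_congr rfl h1, Finset.sum_comm]
      refine Finset.sum_congr rfl fun y _ => ?_
      rw [← Finset.sum_filter, Finset.sum_const, smul_eq_mul]
    -- step 2: coefficient identity
    have hcoeff : ∀ y ∈ Γ.lev (Γ.rank v),
        ((Γ.up v).filter (fun w => Γ.covers y w)).card =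
          (if y = v then 1 else 0) + ((Γ.down v).filter (fun x => Γ.covers x y)).card := by
      intro y hy
      by_cases hyv : y = v
      · subst hyv
        have e1 : (Γ.up y).filter (fun w => Γ.covers y w) = Γ.up y := by
          apply Finset.filter_true_of_mem
          intro w hw; exact (Γ.mem_up).mp hw
        have e2 : (Γ.down y).filter (fun x => Γ.covers x y) = Γ.down y := by
          apply Finset.filter_true_of_mem
          intro x hx; exact (Γ.mem_down).mp hx
        rw [e1, e2, Γ.up_card hΓ]
        simp [Nat.add_comm]
      · rw [Γ.common_card hΓ hyv ((Γ.mem_lev).mp hy)]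
        simp [hyv]
    have hstep2 : ∑ w ∈ Γ.up v, Γ.d u w =
        Γ.d u v + ∑ y ∈ Γ.lev (Γ.rank v),
          ((Γ.down v).filter (fun x => Γ.covers x y)).card * Γ.d u y := by
      rw [hstep1, Finset.sum_congr rfl (fun y hy => by rw [hcoeff y hy])]
      have : ∀ y ∈ Γ.lev (Γ.rank v),
          ((if y = v then 1 else 0) + ((Γ.down v).filter (fun x => Γ.covers x y)).card)
            * Γ.d u y =
          (if y = v then Γ.d u v else 0) +
            ((Γ.down v).filter (fun x => Γ.covers x y)).card * Γ.d u y := by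
        intro y hy
        by_cases hyv : y = v <;> simp [hyv, Nat.add_mul]
      rw [Finset.sum_congr rfl this, Finset.sum_add_distrib,
        Finset.sum_ite_eq' (Γ.lev (Γ.rank v)) v (fun _ => Γ.d u v)]
      have hv : v ∈ Γ.lev (Γ.rank v) := (Γ.mem_lev).mpr rfl
      simp [hv]
    -- step 3: swap to sum over down v of up x
    have hstep3 : ∑ y ∈ Γ.lev (Γ.rank v),
        ((Γ.down v).filter (fun x => Γ.covers x y)).card * Γ.d u y =
        ∑ x ∈ Γ.down v, ∑ y ∈ Γ.up x, Γ.d u y := by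
      have h1 : ∀ y ∈ Γ.lev (Γ.rank v),
          ((Γ.down v).filter (fun x => Γ.covers x y)).card * Γ.d u y =
          ∑ x ∈ Γ.down v, if Γ.covers x y then Γ.d u y else 0 := by
        intro y _
        rw [← Finset.sum_filter, Finset.sum_const, smul_eq_mul]
      rw [Finset.sum_congr rfl h1, Finset.sum_comm]
      refine Finset.sum_congr rfl fun x hx => ?_
      have hrx : Γ.rank x + 1 = Γ.rank v := by
        have := Γ.rank_covers x v ((Γ.mem_down).mp hx)
        omega
      have : Γ.up x = (Γ.lev (Γ.rank v)).filter (fun y => Γ.covers x y) := by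
        unfold up
        rw [hrx]
      rw [this, Finset.sum_filter]
    -- step 4: apply IH to each x ∈ down v
    have hstep4 : ∀ x ∈ Γ.down v, ∑ y ∈ Γ.up x, Γ.d u y =
        ∑ x' ∈ Γ.down u, Γ.d x' x + (Γ.rank v - Γ.rank u) * Γ.d u x := by
      intro x hx
      have hrx : Γ.rank x + 1 = Γ.rank v := by
        have := Γ.rank_covers x v ((Γ.mem_down).mp hx)
        omega
      have := ih (Γ.rank x) (by omega) x rfl u
      rw [this]
      congr 2
      omega
    -- step 5: combine
    have hswap : ∑ x ∈ Γ.down v, ∑ x' ∈ Γ.down u, Γ.d x' x =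
        ∑ x' ∈ Γ.down u, Γ.d x' v := by
      rw [Finset.sum_comm]
      refine Finset.sum_congr rfl fun x' hx' => ?_
      have hrx' : Γ.rank x' + 1 = Γ.rank u := Γ.rank_covers x' u ((Γ.mem_down).mp hx') |>.symm
      have hne : x' ≠ v := by
        intro h; subst h; omega
      exact (Γ.d_rec_s12 hne).symm
    have hlast : ∑ x ∈ Γ.down v, Γ.d u x = if u = v then 0 else Γ.d u v := by
      by_cases huv : u = v
      · subst huv
        rw [if_pos rfl]
        apply Finset.sum_eq_zero
        intro x hx
        have hrx := Γ.rank_covers x u ((Γ.mem_down).mp hx)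
        exact Γ.d_eq_zero (by intro h; subst h; omega) (by omega)
      · rw [if_neg huv]
        exact (Γ.d_rec_s12 huv).symm
    rw [hstep2, hstep3, Finset.sum_congr rfl hstep4, Finset.sum_add_distrib,
      hswap, ← Finset.mul_sum, hlast]
    by_cases huv : u = v
    · subst huv
      rw [if_pos rfl, d_self]
      have : Γ.rank u + 1 - Γ.rank u = 1 := by omega
      rw [this]
      ring
    · rw [if_neg huv]
      have h1 : Γ.rank v + 1 - Γ.rank u = (Γ.rank v - Γ.rank u) + 1 := by omega
      rw [h1]
      ring
  · -- rank u > rank v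
    push_neg at hk
    by_cases hk1 : Γ.rank u = Γ.rank v + 1
    · have hL : ∑ w ∈ Γ.up v, Γ.d u w = if Γ.covers v u then 1 else 0 := by
        have h1 : ∀ w ∈ Γ.up v, Γ.d u w = if u = w then 1 else 0 := by
          intro w hw
          have hrw : Γ.rank w = Γ.rank v + 1 := Γ.rank_covers v w ((Γ.mem_up).mp hw)
          by_cases h : u = w
          · subst h; simp [d_self]
          · rw [if_neg h]
            exact Γ.d_eq_zero h (by omega)
        rw [Finset.sum_congr rfl h1, Finset.sum_ite_eq (Γ.up v) u (fun _ => 1)]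
        simp [mem_up]
      have hR : ∑ x ∈ Γ.down u, Γ.d x v = if Γ.covers v u then 1 else 0 := by
        have h1 : ∀ x ∈ Γ.down u, Γ.d x v = if x = v then 1 else 0 := by
          intro x hx
          have hrx : Γ.rank x + 1 = Γ.rank u := (Γ.rank_covers x u ((Γ.mem_down).mp hx)).symm
          by_cases h : x = v
          · subst h; simp [d_self]
          · rw [if_neg h]
            exact Γ.d_eq_zero h (by omega)
        rw [Finset.sum_congr rfl h1, Finset.sum_ite_eq' (Γ.down u) v (fun _ => 1)]
        simp [mem_down]
      rw [hL, hR]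
      have : Γ.rank v + 1 - Γ.rank u = 0 := by omega
      rw [this]
      ring
    · -- rank u > rank v + 1 : everything vanishes
      have hL : ∑ w ∈ Γ.up v, Γ.d u w = 0 := by
        apply Finset.sum_eq_zero
        intro w hw
        have hrw : Γ.rank w = Γ.rank v + 1 := Γ.rank_covers v w ((Γ.mem_up).mp hw)
        exact Γ.d_eq_zero (by intro h; subst h; omega) (by omega)
      have hR : ∑ x ∈ Γ.down u, Γ.d x v = 0 := by
        apply Finset.sum_eq_zero
        intro x hx
        have hrx : Γ.rank x + 1 = Γ.rank u := (Γ.rank_covers x u ((Γ.mem_down).mp hx)).symm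
        exact Γ.d_eq_zero (by intro h; subst h; omega) (by omega)
      rw [hL, hR, Γ.d_eq_zero (by intro h; subst h; omega) (by omega)]
      ring

end BranchingDiagram
namespace BranchingDiagram
variable (Γ : BranchingDiagram)

open scoped Classical

noncomputable def S (φ : Γ.V → ℝ) (k : ℕ) (v : Γ.V) : ℝ :=
  ∑ u ∈ Γ.lev k, φ u * (Γ.d u v : ℝ)

lemma finsum_S (φ : Γ.V → ℝ) (k : ℕ) (v : Γ.V) :
    ∑ᶠ u ∈ {u : Γ.V | Γ.rank u = k}, φ u * (Γ.d u v : ℝ) = Γ.S φ k v := by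
  have h : {u : Γ.V | Γ.rank u = k} = ↑(Γ.lev k) := by
    ext u; simp [mem_lev]
  rw [h, finsum_mem_coe_finset]; rfl

lemma contract_eq (τ : ℝ) (φ : Γ.V → ℝ) (v : Γ.V) : Γ.contract τ φ v =
    ∑ k ∈ Finset.range (Γ.rank v + 1),
      τ ^ k * (1 - τ) ^ (Γ.rank v - k) / (Γ.rank v - k).factorial * Γ.S φ k v := by
  unfold contract
  exact Finset.sum_congr rfl fun k _ => by rw [finsum_S]

lemma key (hΓ : Γ.IsDifferential) (φ : Γ.V → ℝ)
    (hharm : ∀ u, φ u = ∑ w ∈ Γ.up u, φ w) (k : ℕ) (v : Γ.V) :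
    ∑ w ∈ Γ.up v, Γ.S φ k w =
      (if k = 0 then 0 else Γ.S φ (k - 1) v) +
        ((Γ.rank v + 1 - k : ℕ) : ℝ) * Γ.S φ k v := by
  have hA : ∑ w ∈ Γ.up v, Γ.S φ k w =
      ∑ u ∈ Γ.lev k, φ u * (∑ x ∈ Γ.down u, (Γ.d x v : ℝ)) +
      ∑ u ∈ Γ.lev k, φ u * (((Γ.rank v + 1 - k : ℕ) : ℝ) * (Γ.d u v : ℝ)) := by
    unfold S
    rw [Finset.sum_comm, ← Finset.sum_add_distrib]
    refine Finset.sum_congr rfl fun u hu => ?_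
    have hku : Γ.rank u = k := (Γ.mem_lev).mp hu
    rw [← Finset.mul_sum, ← mul_add]
    congr 1
    have hstar := Γ.star hΓ (Γ.rank v) v rfl u
    have hcast : ∑ w ∈ Γ.up v, (Γ.d u w : ℝ) =
        ((∑ x ∈ Γ.down u, Γ.d x v +
          (Γ.rank v + 1 - Γ.rank u) * Γ.d u v : ℕ) : ℝ) := by
      rw [← hstar]; push_cast; ring
    rw [hcast, hku]; push_cast; ring
  have hB : ∑ u ∈ Γ.lev k, φ u * (((Γ.rank v + 1 - k : ℕ) : ℝ) * (Γ.d u v : ℝ)) =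
      ((Γ.rank v + 1 - k : ℕ) : ℝ) * Γ.S φ k v := by
    unfold S
    rw [Finset.mul_sum]
    exact Finset.sum_congr rfl fun u _ => by ring
  have hC : ∑ u ∈ Γ.lev k, φ u * (∑ x ∈ Γ.down u, (Γ.d x v : ℝ)) =
      (if k = 0 then 0 else Γ.S φ (k - 1) v) := by
    match k with
    | 0 =>
      rw [if_pos rfl]
      apply Finset.sum_eq_zero
      intro u hu
      have hu0 : Γ.rank u = 0 := (Γ.mem_lev).mp hu
      have : Γ.down u = ∅ := by
        rw [Finset.eq_empty_iff_forall_notMem]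
        intro x hx
        have := Γ.rank_covers x u ((Γ.mem_down).mp hx)
        omega
      rw [this]; simp
    | j + 1 =>
      rw [if_neg (by omega)]
      have h1 : ∀ u ∈ Γ.lev (j + 1), φ u * (∑ x ∈ Γ.down u, (Γ.d x v : ℝ)) =
          ∑ x ∈ Γ.lev j, if Γ.covers x u then φ u * (Γ.d x v : ℝ) else 0 := by
        intro u hu
        have hju : Γ.rank u = j + 1 := (Γ.mem_lev).mp hu
        have hd : Γ.down u = (Γ.lev j).filter (fun x => Γ.covers x u) := by
          unfold down
          have : Γ.rank u - 1 = j := by omega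
          rw [this]
        rw [Finset.mul_sum, hd, Finset.sum_filter]
      rw [Finset.sum_congr rfl h1, Finset.sum_comm]
      have h2 : ∀ x ∈ Γ.lev j,
          (∑ u ∈ Γ.lev (j + 1), if Γ.covers x u then φ u * (Γ.d x v : ℝ) else 0) =
            φ x * (Γ.d x v : ℝ) := by
        intro x hx
        have hjx : Γ.rank x = j := (Γ.mem_lev).mp hx
        have hup : Γ.up x = (Γ.lev (j + 1)).filter (fun u => Γ.covers x u) := by
          unfold up
          rw [hjx]
        rw [← Finset.sum_filter, ← hup, ← Finset.sum_mul]
        rw [← hharm x]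
      rw [Finset.sum_congr rfl h2]
      rfl
  rw [hA, hB, hC]

lemma lev_zero : Γ.lev 0 = {Γ.bot} := by
  ext v
  simp only [mem_lev, Finset.mem_singleton]
  exact ⟨fun h => Γ.bot_unique v h, fun h => h ▸ Γ.rank_bot⟩

end BranchingDiagram
/-- If `φ` is a non-negative normalized harmonic function on a `1`-differential
poset and `0 ≤ τ ≤ 1`, then `C_τ(φ)` is a non-negative normalized harmonic
function. -/
theorem stmt_12 (Γ : BranchingDiagram) (hΓ : Γ.IsDifferential) (φ : Γ.V → ℝ)
    (hpos : ∀ v, 0 ≤ φ v) (hnorm : φ Γ.bot = 1)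
    (hharm : ∀ u, φ u = ∑ᶠ w ∈ {w | Γ.covers u w}, φ w)
    (τ : ℝ) (hτ0 : 0 ≤ τ) (hτ1 : τ ≤ 1) :
    (∀ v, 0 ≤ Γ.contract τ φ v) ∧ Γ.contract τ φ Γ.bot = 1 ∧
    (∀ u, Γ.contract τ φ u = ∑ᶠ w ∈ {w | Γ.covers u w}, Γ.contract τ φ w) := by
  have hharm' : ∀ u, φ u = ∑ w ∈ Γ.up u, φ w := by
    intro u
    rw [hharm u, Γ.covers_upper_coe u, finsum_mem_coe_finset]
  have hSnonneg : ∀ (k : ℕ) (v : Γ.V), 0 ≤ Γ.S φ k v := by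
    intro k v
    apply Finset.sum_nonneg
    intro u _
    exact mul_nonneg (hpos u) (Nat.cast_nonneg _)
  refine ⟨?_, ?_, ?_⟩
  · -- nonnegativity
    intro v
    rw [Γ.contract_eq]
    apply Finset.sum_nonneg
    intro k _
    apply mul_nonneg _ (hSnonneg k v)
    apply div_nonneg _ (Nat.cast_nonneg _)
    exact mul_nonneg (pow_nonneg hτ0 k) (pow_nonneg (by linarith) _)
  · -- normalization
    rw [Γ.contract_eq]
    simp only [Γ.rank_bot]
    have hS0 : Γ.S φ 0 Γ.bot = 1 := by
      unfold BranchingDiagram.S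
      rw [Γ.lev_zero, Finset.sum_singleton, Γ.d_self, hnorm]
      simp
    rw [Finset.sum_range_one, hS0]
    norm_num
  · -- harmonicity
    intro v
    obtain ⟨n, hn⟩ : ∃ n, Γ.rank v = n := ⟨_, rfl⟩
    rw [Γ.contract_eq, hn, Γ.covers_upper_coe v, finsum_mem_coe_finset]
    have hrw : ∀ w ∈ Γ.up v, Γ.contract τ φ w =
        ∑ k ∈ Finset.range (n + 2),
          τ ^ k * (1 - τ) ^ (n + 1 - k) / (n + 1 - k).factorial * Γ.S φ k w := by
      intro w hw
      rw [Γ.contract_eq]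
      have h : Γ.rank w = n + 1 := by
        rw [Γ.rank_covers v w ((Γ.mem_up).mp hw), hn]
      rw [h]
    rw [Finset.sum_congr rfl hrw, Finset.sum_comm]
    have h2 : ∀ k ∈ Finset.range (n + 2),
        (∑ w ∈ Γ.up v,
          τ ^ k * (1 - τ) ^ (n + 1 - k) / (n + 1 - k).factorial * Γ.S φ k w) =
        τ ^ k * (1 - τ) ^ (n + 1 - k) / (n + 1 - k).factorial *
          ((if k = 0 then 0 else Γ.S φ (k - 1) v) +
            ((n + 1 - k : ℕ) : ℝ) * Γ.S φ k v) := by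
      intro k _
      rw [← Finset.mul_sum]
      congr 1
      have := Γ.key hΓ φ hharm' k v
      rw [hn] at this
      exact this
    rw [Finset.sum_congr rfl h2]
    have h3 : ∑ k ∈ Finset.range (n + 2),
        τ ^ k * (1 - τ) ^ (n + 1 - k) / (n + 1 - k).factorial *
          ((if k = 0 then 0 else Γ.S φ (k - 1) v) +
            ((n + 1 - k : ℕ) : ℝ) * Γ.S φ k v) =
        (∑ k ∈ Finset.range (n + 2),
          τ ^ k * (1 - τ) ^ (n + 1 - k) / (n + 1 - k).factorial *
            (if k = 0 then 0 else Γ.S φ (k - 1) v)) +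
        ∑ k ∈ Finset.range (n + 2),
          τ ^ k * (1 - τ) ^ (n + 1 - k) / (n + 1 - k).factorial *
            (((n + 1 - k : ℕ) : ℝ) * Γ.S φ k v) := by
      rw [← Finset.sum_add_distrib]
      exact Finset.sum_congr rfl fun k _ => by ring
    rw [h3]
    have h4 : (∑ k ∈ Finset.range (n + 2),
        τ ^ k * (1 - τ) ^ (n + 1 - k) / (n + 1 - k).factorial *
          (if k = 0 then 0 else Γ.S φ (k - 1) v)) =
        ∑ j ∈ Finset.range (n + 1),
          τ ^ (j + 1) * (1 - τ) ^ (n - j) / (n - j).factorial * Γ.S φ j v := by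
      rw [Finset.sum_range_succ']
      have hzero : τ ^ 0 * (1 - τ) ^ (n + 1 - 0) / (n + 1 - 0).factorial *
          (if (0 : ℕ) = 0 then (0 : ℝ) else Γ.S φ (0 - 1) v) = 0 := by simp
      rw [hzero, add_zero]
      refine Finset.sum_congr rfl fun j _ => ?_
      have e1 : n + 1 - (j + 1) = n - j := by omega
      rw [e1, if_neg (Nat.succ_ne_zero j), Nat.add_sub_cancel]
    have h5 : (∑ k ∈ Finset.range (n + 2),
        τ ^ k * (1 - τ) ^ (n + 1 - k) / (n + 1 - k).factorial *
          (((n + 1 - k : ℕ) : ℝ) * Γ.S φ k v)) =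
        ∑ k ∈ Finset.range (n + 1),
          τ ^ k * (1 - τ) ^ (n + 1 - k) / (n + 1 - k).factorial *
            (((n + 1 - k : ℕ) : ℝ) * Γ.S φ k v) := by
      rw [Finset.sum_range_succ]
      simp [Nat.sub_self]
    rw [h4, h5, ← Finset.sum_add_distrib]
    refine Finset.sum_congr rfl fun j hj => ?_
    have hjn : j ≤ n := by
      simp only [Finset.mem_range] at hj; omega
    have e1 : n + 1 - j = (n - j) + 1 := by omega
    rw [e1]
    set m := n - j with hm
    have hf : ((m + 1).factorial : ℝ) = ((m : ℕ) + 1) * m.factorial := by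
      rw [Nat.factorial_succ]; push_cast; ring
    have h0 : (m.factorial : ℝ) ≠ 0 := by
      exact_mod_cast (Nat.factorial_pos m).ne'
    have h1 : ((m : ℕ) : ℝ) + 1 ≠ 0 := by positivity
    rw [hf]
    push_cast
    field_simp
    ring
end

section
/- Let v be a finite Fibonacci word with 2's at positions d_1 < … < d_n, and for k ≥ 2 set π_k(v) = ∏_{j : d_j ≥ k−1} (1 − k/d_j) and π(v) = ∏_{j : d_j ≥ 2} (1 − 1/d_j). Then |π_k(v)| ≤ (k · π(v))^k. -/
/-- The list of positions of the `2`'s in a Fibonacci word (leftmost `2` first):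
if `w = u ++ 2 :: v` then the position of the indicated `2` is `|v| + 1`, where
`|v|` is the sum of the digits of `v`. -/
def pos2 : List ℕ → List ℕ
  | [] => []
  | 2 :: t => (t.sum + 1) :: pos2 t
  | _ :: t => pos2 t

/-- `π(v) = ∏_{j : d_j ≥ 2} (1 − 1/d_j)`, the product over positions of `2`'s. -/
noncomputable def piWord (v : List ℕ) : ℝ :=
  (((pos2 v).filter (fun d => decide (2 ≤ d))).map (fun d => 1 - 1 / (d : ℝ))).prod

/-- `π_k(v) = ∏_{j : d_j ≥ k−1} (1 − k/d_j)`, the product over positions of `2`'s. -/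
noncomputable def piK (k : ℕ) (v : List ℕ) : ℝ :=
  (((pos2 v).filter (fun d => decide (k - 1 ≤ d))).map (fun d => 1 - (k : ℝ) / (d : ℝ))).prod

lemma pos2_le_sum {v : List ℕ} (hv : IsFibWord v) : ∀ d ∈ pos2 v, d ≤ v.sum := by
  induction v with
  | nil => intro d hd; simp [pos2] at hd
  | cons a t ih =>
    have ht : IsFibWord t := fun x hx => hv x (List.mem_cons_of_mem _ hx)
    intro d hd
    rcases hv a (List.mem_cons_self) with h1 | h2
    · subst h1
      have : d ≤ t.sum := ih ht d hd
      simp only [List.sum_cons]; omega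
    · subst h2
      rw [show pos2 (2 :: t) = (t.sum + 1) :: pos2 t from rfl] at hd
      rcases List.mem_cons.mp hd with rfl | hd
      · simp only [List.sum_cons]; omega
      · have := ih ht d hd; simp only [List.sum_cons]; omega

lemma pos2_pairwise {v : List ℕ} (hv : IsFibWord v) : (pos2 v).Pairwise (· > ·) := by
  induction v with
  | nil => simp [pos2]
  | cons a t ih =>
    have ht : IsFibWord t := fun x hx => hv x (List.mem_cons_of_mem _ hx)
    rcases hv a (List.mem_cons_self) with h1 | h2
    · subst h1; exact ih ht
    · subst h2
      rw [show pos2 (2 :: t) = (t.sum + 1) :: pos2 t from rfl]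
      refine List.Pairwise.cons ?_ (ih ht)
      intro d hd
      have := pos2_le_sum ht d hd
      omega

lemma prod_Icc_telescope : ∀ m : ℕ, 1 ≤ m →
    ∏ d ∈ Finset.Icc 2 m, (1 - 1 / (d : ℝ)) = 1 / (m : ℝ) := by
  intro m
  induction m with
  | zero => omega
  | succ n ih =>
    intro _
    rcases Nat.eq_zero_or_pos n with rfl | hn
    · norm_num
    · rw [Finset.prod_Icc_succ_top (by omega), ih hn]
      have hn' : (n : ℝ) ≠ 0 := Nat.cast_ne_zero.mpr (by omega)
      have hn1 : ((n : ℝ) + 1) ≠ 0 := by positivity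
      push_cast
      field_simp
      ring

/-- For every Fibonacci word `v` and every `k ≥ 2`, `|π_k(v)| ≤ (k·π(v))^k`. -/
theorem stmt_18 (v : List ℕ) (hv : IsFibWord v) (k : ℕ) (hk : 2 ≤ k) :
    |piK k v| ≤ ((k : ℝ) * piWord v) ^ k := by
  classical
  have hnd : (pos2 v).Nodup := (pos2_pairwise hv).imp (fun h => Nat.ne_of_gt h)
  set S : Finset ℕ := (pos2 v).toFinset with hS
  have hpk : piK k v = ∏ d ∈ S.filter (fun d => k - 1 ≤ d), (1 - (k : ℝ) / d) := by
    rw [piK]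
    rw [show (do let a ← List.filter (fun d => decide (k - 1 ≤ d)) (pos2 v); pure ((a : ℕ) : ℝ))
        = ((pos2 v).filter (fun d => decide (k - 1 ≤ d))).map (fun a : ℕ => (a : ℝ)) from
      List.map_eq_flatMap.symm]
    rw [List.map_map, ← List.prod_toFinset _ (hnd.filter _), List.toFinset_filter]
    simp [Function.comp, hS]
  have hpw : piWord v = ∏ d ∈ S.filter (fun d => 2 ≤ d), (1 - 1 / (d : ℝ)) := by
    rw [piWord]
    rw [show (do let a ← List.filter (fun d => decide (2 ≤ d)) (pos2 v); pure ((a : ℕ) : ℝ))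
        = ((pos2 v).filter (fun d => decide (2 ≤ d))).map (fun a : ℕ => (a : ℝ)) from
      List.map_eq_flatMap.symm]
    rw [List.map_map, ← List.prod_toFinset _ (hnd.filter _), List.toFinset_filter]
    simp [Function.comp, hS]
  set A : Finset ℕ := S.filter (fun d => k ≤ d) with hA
  set D : Finset ℕ := S.filter (fun d => 2 ≤ d ∧ d < k) with hD
  -- split piK
  have hsplitB : (S.filter (fun d => k - 1 ≤ d)).filter (fun d => k ≤ d) = A := by
    rw [Finset.filter_filter]
    exact Finset.filter_congr (fun d _ => by constructor <;> intro h <;> omega)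
  have hsplitB' : (S.filter (fun d => k - 1 ≤ d)).filter (fun d => ¬ k ≤ d)
      = S.filter (fun d => d = k - 1) := by
    rw [Finset.filter_filter]
    exact Finset.filter_congr (fun d _ => by constructor <;> intro h <;> omega)
  have habs : |piK k v| = (∏ d ∈ A, |1 - (k : ℝ) / d|) *
      (∏ d ∈ S.filter (fun d => d = k - 1), |1 - (k : ℝ) / d|) := by
    rw [hpk, Finset.abs_prod, ← Finset.prod_filter_mul_prod_filter_not
      (S.filter (fun d => k - 1 ≤ d)) (fun d => k ≤ d), hsplitB, hsplitB']
  -- the small factor is at most 1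
  have hsmall : (∏ d ∈ S.filter (fun d => d = k - 1), |1 - (k : ℝ) / d|) ≤ 1 := by
    rw [Finset.filter_eq']
    split_ifs with h
    · rw [Finset.prod_singleton]
      have hx : ((k - 1 : ℕ) : ℝ) = (k : ℝ) - 1 := by
        push_cast [Nat.cast_sub (by omega : 1 ≤ k)]; ring
      have hx1 : (1 : ℝ) ≤ (k : ℝ) - 1 := by
        have : (2 : ℝ) ≤ (k : ℝ) := by exact_mod_cast hk
        linarith
      have hx0 : ((k : ℝ) - 1) ≠ 0 := by linarith
      have : (1 : ℝ) - (k : ℝ) / ((k - 1 : ℕ) : ℝ) = -(1 / ((k : ℝ) - 1)) := by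
        rw [hx]; field_simp; ring
      rw [this, abs_neg, abs_of_nonneg (by positivity)]
      rw [div_le_one (by linarith)]; exact hx1
    · simp
  -- terms over A are nonneg and bounded by Bernoulli
  have hAk : ∀ d ∈ A, (k : ℕ) ≤ d := fun d hd => (Finset.mem_filter.mp hd).2
  have hterm_nonneg : ∀ d ∈ A, (0 : ℝ) ≤ 1 - (k : ℝ) / d := by
    intro d hd
    have hdk := hAk d hd
    have hd0 : (0 : ℝ) < (d : ℝ) := by
      have : 0 < d := by omega
      exact_mod_cast this
    have : (k : ℝ) ≤ (d : ℝ) := by exact_mod_cast hdk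
    have : (k : ℝ) / d ≤ 1 := by rw [div_le_one hd0]; exact this
    linarith
  have hbern : ∀ d ∈ A, (1 : ℝ) - (k : ℝ) / d ≤ (1 - 1 / (d : ℝ)) ^ k := by
    intro d hd
    have hdk := hAk d hd
    have hd0 : (0 : ℝ) < (d : ℝ) := by
      have : 0 < d := by omega
      exact_mod_cast this
    have h2 : (-2 : ℝ) ≤ -(1 / (d : ℝ)) := by
      have : 1 / (d : ℝ) ≤ 1 := by
        rw [div_le_one hd0]; exact_mod_cast (by omega : 1 ≤ d)
      linarith
    have := one_add_mul_le_pow h2 k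
    have e1 : (1 : ℝ) + (k : ℝ) * (-(1 / d)) = 1 - (k : ℝ) / d := by ring
    have e2 : (1 : ℝ) + (-(1 / (d : ℝ))) = 1 - 1 / d := by ring
    rw [e1, e2] at this
    exact this
  have hstep1 : (∏ d ∈ A, |1 - (k : ℝ) / d|) ≤ ∏ d ∈ A, (1 - 1 / (d : ℝ)) ^ k := by
    refine Finset.prod_le_prod (fun d hd => abs_nonneg _) (fun d hd => ?_)
    rw [abs_of_nonneg (hterm_nonneg d hd)]
    exact hbern d hd
  -- split piWord
  have hsplitC : (S.filter (fun d => 2 ≤ d)).filter (fun d => k ≤ d) = A := by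
    rw [Finset.filter_filter]
    exact Finset.filter_congr (fun d _ => by constructor <;> intro h <;> omega)
  have hsplitC' : (S.filter (fun d => 2 ≤ d)).filter (fun d => ¬ k ≤ d) = D := by
    rw [Finset.filter_filter]
    exact Finset.filter_congr (fun d _ => by constructor <;> intro h <;> omega)
  have hCsplit : (∏ d ∈ S.filter (fun d => 2 ≤ d), (1 - 1 / (d : ℝ)) ^ k)
      = (∏ d ∈ A, (1 - 1 / (d : ℝ)) ^ k) * (∏ d ∈ D, (1 - 1 / (d : ℝ)) ^ k) := by
    rw [← Finset.prod_filter_mul_prod_filter_not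
      (S.filter (fun d => 2 ≤ d)) (fun d => k ≤ d), hsplitC, hsplitC']
  -- the D-product is at least 1/k
  have hDnonneg : ∀ d ∈ D, (0 : ℝ) ≤ 1 - 1 / (d : ℝ) := by
    intro d hd
    have h2 : 2 ≤ d := (Finset.mem_filter.mp hd).2.1
    have hd0 : (0 : ℝ) < (d : ℝ) := by exact_mod_cast (by omega : 0 < d)
    have : 1 / (d : ℝ) ≤ 1 := by
      rw [div_le_one hd0]; exact_mod_cast (by omega : 1 ≤ d)
    linarith
  have hDsub : D ⊆ Finset.Icc 2 (k - 1) := by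
    intro d hd
    have h := (Finset.mem_filter.mp hd).2
    rw [Finset.mem_Icc]; omega
  have hDlower : 1 / (k : ℝ) ≤ ∏ d ∈ D, (1 - 1 / (d : ℝ)) := by
    have hIcc : ∏ d ∈ Finset.Icc 2 (k - 1), (1 - 1 / (d : ℝ)) = 1 / ((k - 1 : ℕ) : ℝ) :=
      prod_Icc_telescope (k - 1) (by omega)
    have hfull : ∏ d ∈ Finset.Icc 2 (k - 1), (1 - 1 / (d : ℝ))
        ≤ ∏ d ∈ D, (1 - 1 / (d : ℝ)) := by
      rw [← Finset.prod_sdiff hDsub]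
      have h1 : (∏ d ∈ Finset.Icc 2 (k - 1) \ D, (1 - 1 / (d : ℝ))) ≤ 1 := by
        refine Finset.prod_le_one (fun d hd => ?_) (fun d hd => ?_)
        · have h2 : 2 ≤ d := (Finset.mem_Icc.mp (Finset.mem_sdiff.mp hd).1).1
          have hd0 : (0 : ℝ) < (d : ℝ) := by exact_mod_cast (by omega : 0 < d)
          have : (0:ℝ) < 1 / (d : ℝ) := by positivity
          have : 1 / (d : ℝ) ≤ 1 := by
            rw [div_le_one hd0]; exact_mod_cast (by omega : 1 ≤ d)
          linarith
        · have h2 : 2 ≤ d := (Finset.mem_Icc.mp (Finset.mem_sdiff.mp hd).1).1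
          have hd0 : (0 : ℝ) < (d : ℝ) := by exact_mod_cast (by omega : 0 < d)
          have : (0:ℝ) < 1 / (d : ℝ) := by positivity
          linarith
      have h2 : (0 : ℝ) ≤ ∏ d ∈ D, (1 - 1 / (d : ℝ)) := Finset.prod_nonneg hDnonneg
      calc (∏ d ∈ Finset.Icc 2 (k-1) \ D, (1 - 1/(d:ℝ))) * ∏ d ∈ D, (1 - 1/(d:ℝ))
          ≤ 1 * ∏ d ∈ D, (1 - 1/(d:ℝ)) := mul_le_mul_of_nonneg_right h1 h2
        _ = ∏ d ∈ D, (1 - 1/(d:ℝ)) := one_mul _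
    have hk1 : (1 : ℝ) ≤ ((k - 1 : ℕ) : ℝ) := by exact_mod_cast (by omega : 1 ≤ k - 1)
    have hkk : ((k - 1 : ℕ) : ℝ) ≤ (k : ℝ) := by exact_mod_cast (by omega : k - 1 ≤ k)
    have : 1 / (k : ℝ) ≤ 1 / ((k - 1 : ℕ) : ℝ) :=
      one_div_le_one_div_of_le (by linarith) hkk
    linarith [hIcc ▸ hfull]
  -- assemble
  have hkpos : (0 : ℝ) < (k : ℝ) := by exact_mod_cast (by omega : 0 < k)
  have hone : (1 : ℝ) ≤ (k : ℝ) * ∏ d ∈ D, (1 - 1 / (d : ℝ)) := by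
    have := mul_le_mul_of_nonneg_left hDlower (le_of_lt hkpos)
    rw [mul_one_div, div_self (ne_of_gt hkpos)] at this
    exact this
  have honek : (1 : ℝ) ≤ ((k : ℝ) * ∏ d ∈ D, (1 - 1 / (d : ℝ))) ^ k := one_le_pow₀ hone
  have hApow_nonneg : (0 : ℝ) ≤ ∏ d ∈ A, (1 - 1 / (d : ℝ)) ^ k := by
    refine Finset.prod_nonneg (fun d hd => ?_)
    have hdk := hAk d hd
    have hd0 : (0 : ℝ) < (d : ℝ) := by exact_mod_cast (by omega : 0 < d)
    have h1 : 1 / (d : ℝ) ≤ 1 := by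
      rw [div_le_one hd0]; exact_mod_cast (by omega : 1 ≤ d)
    exact pow_nonneg (by linarith) k
  rw [habs, hpw, mul_pow, ← Finset.prod_pow, hCsplit]
  calc (∏ d ∈ A, |1 - (k : ℝ) / d|) * (∏ d ∈ S.filter (fun d => d = k - 1), |1 - (k : ℝ) / d|)
      ≤ (∏ d ∈ A, (1 - 1 / (d : ℝ)) ^ k) * 1 := by
        exact mul_le_mul hstep1 hsmall (Finset.prod_nonneg (fun d _ => abs_nonneg _)) hApow_nonneg
    _ ≤ (∏ d ∈ A, (1 - 1 / (d : ℝ)) ^ k) * ((k : ℝ) * ∏ d ∈ D, (1 - 1 / (d : ℝ))) ^ k := by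
        exact mul_le_mul_of_nonneg_left honek hApow_nonneg
    _ = (k : ℝ) ^ k * ((∏ d ∈ A, (1 - 1 / (d : ℝ)) ^ k) * ∏ d ∈ D, (1 - 1 / (d : ℝ)) ^ k) := by
        rw [mul_pow, ← Finset.prod_pow]
        ring
end
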